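/- Let dim H < ∞ and let (F,v), (G,w) be c-Bessel mappings for H with Bessel bounds B_{F,v}, B_{G,w}. If Q ∈ B(L²(X,F), L²(X,G)) satisfies T_{G,w} Q T*_{F,v} = I_H, then ‖Q‖ ≥ (dim H)^{-1} / √(B_{F,v} B_{G,w}). -/

import Mathlib

open MeasureTheory
open scoped ENNReal InnerProductSpace

noncomputable section

variable {H : Type} [NormedAddCommGroup H] [InnerProductSpace ℂ H] [CompleteSpace H]
variable {X : Type} [MeasurableSpace X]


lemma amgm_opt {A p q : ℝ} (hp : 0 ≤ p) (hq : 0 ≤ q)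
    (h : ∀ t : ℝ, 0 < t → A ≤ (t / 2) * p ^ 2 + (1 / (2 * t)) * q ^ 2) : A ≤ p * q := by
  rcases eq_or_lt_of_le hp with hp0 | hp0
  · subst hp0
    refine le_of_forall_pos_le_add fun ε hε => ?_
    have ht : (0:ℝ) < max 1 (q ^ 2 / (2 * ε)) := lt_of_lt_of_le one_pos (le_max_left _ _)
    have h1 := h _ ht
    have h2 : (1 / (2 * max 1 (q ^ 2 / (2 * ε)))) * q ^ 2 ≤ ε := by
      rw [div_mul_eq_mul_div, one_mul, div_le_iff₀ (by positivity)]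
      have : q ^ 2 / (2 * ε) ≤ max 1 (q ^ 2 / (2 * ε)) := le_max_right _ _
      rw [div_le_iff₀ (by positivity)] at this
      nlinarith
    simp only [ne_eq, OfNat.ofNat_ne_zero, not_false_eq_true, zero_pow, mul_zero,
      zero_add] at h1
    simp only [zero_mul, zero_add]
    linarith
  rcases eq_or_lt_of_le hq with hq0 | hq0
  · subst hq0
    refine le_of_forall_pos_le_add fun ε hε => ?_
    have h1 := h (2 * ε / p ^ 2) (by positivity)
    have h2 : (2 * ε / p ^ 2 / 2) * p ^ 2 = ε := by field_simp
    simp only [ne_eq, OfNat.ofNat_ne_zero, not_false_eq_true, zero_pow, mul_zero,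
      add_zero] at h1
    simp only [mul_zero, zero_add]
    linarith
  · have h1 := h (q / p) (by positivity)
    have h2 : (q / p / 2) * p ^ 2 + (1 / (2 * (q / p))) * q ^ 2 = p * q := by
      field_simp; ring
    linarith

lemma amgm_step {t a c : ℝ} (ht : 0 < t) : a * c ≤ t / 2 * a ^ 2 + 1 / (2 * t) * c ^ 2 := by
  have h := sq_nonneg (t * a - c)
  have hexp : (1 / (2 * t)) * (t * a - c) ^ 2 = t / 2 * a ^ 2 - a * c + 1 / (2 * t) * c ^ 2 := by
    field_simp
    ring
  nlinarith [mul_nonneg (by positivity : (0:ℝ) ≤ 1 / (2 * t)) h]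

lemma lintegral_norm_sq_eq (μ : Measure X) (f : Lp H 2 μ) :
    ∫⁻ x, ENNReal.ofReal (‖f x‖ ^ 2) ∂μ = ENNReal.ofReal (‖f‖ ^ 2) := by
  have hint : Integrable (fun x => ‖f x‖ ^ 2) μ := by
    refine (L2.integrable_inner (𝕜 := ℂ) f f).re.congr ?_
    filter_upwards with x
    exact inner_self_eq_norm_sq _
  have h1 : ‖f‖ ^ 2 = ∫ x, ‖f x‖ ^ 2 ∂μ := by
    rw [← inner_self_eq_norm_sq (𝕜 := ℂ) f, L2.inner_def,
      ← integral_re (L2.integrable_inner f f)]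
    exact integral_congr_ae (Filter.Eventually.of_forall fun x =>
      inner_self_eq_norm_sq _)
  rw [h1, ofReal_integral_eq_lintegral_ofReal hint
    (Filter.Eventually.of_forall fun x => sq_nonneg _)]


open scoped Classical in
def projFn (W : Submodule ℂ H) (h : H) : H :=
  if hW : IsClosed (W : Set H) then
    haveI : CompleteSpace W := hW.completeSpace_coe
    (W.orthogonalProjectionOnto h : H)
  else 0

structure IsCBessel (μ : Measure X) (F : X → Submodule ℂ H) (v : X → ℝ) (B : ℝ) : Prop where
  closed : ∀ x, IsClosed ((F x) : Set H)
  meas : ∀ h : H, AEStronglyMeasurable (fun x => projFn (F x) h) μ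
  bessel : ∀ h : H,
    ∫⁻ x, ENNReal.ofReal ((v x) ^ 2 * ‖projFn (F x) h‖ ^ 2) ∂μ ≤ ENNReal.ofReal (B * ‖h‖ ^ 2)

structure IsCFusionFrame (μ : Measure X) (F : X → Submodule ℂ H) (v : X → ℝ)
    (A B : ℝ) extends IsCBessel μ F v B : Prop where
  posA : 0 < A
  lower : ∀ h : H,
    ENNReal.ofReal (A * ‖h‖ ^ 2) ≤ ∫⁻ x, ENNReal.ofReal ((v x) ^ 2 * ‖projFn (F x) h‖ ^ 2) ∂μ

def L2F (μ : Measure X) (F : X → Submodule ℂ H) : Submodule ℂ (Lp H 2 μ) where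
  carrier := {f | ∀ᵐ x ∂μ, f x ∈ F x}
  add_mem' := by
    intro f g hf hg
    filter_upwards [hf, hg, Lp.coeFn_add f g] with x h1 h2 h3
    rw [h3]
    exact add_mem h1 h2
  zero_mem' := by
    filter_upwards [Lp.coeFn_zero H 2 μ] with x h1
    rw [h1]; exact zero_mem _
  smul_mem' := by
    intro c f hf
    filter_upwards [hf, Lp.coeFn_smul c f] with x h1 h2
    rw [h2]
    exact Submodule.smul_mem _ _ h1

def IsSynthesis (μ : Measure X) (F : X → Submodule ℂ H) (v : X → ℝ)
    (T : L2F μ F →L[ℂ] H) : Prop :=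
  ∀ (f : L2F μ F) (h : H),
    (⟪T f, h⟫_ℂ : ℂ) = ∫ x, (v x : ℂ) * (⟪(↑f : Lp H 2 μ) x, h⟫_ℂ : ℂ) ∂μ



lemma key_bound {μ : Measure X} {F : X → Submodule ℂ H} {v : X → ℝ} {BF : ℝ}
    (hF : IsCBessel μ F v BF) (f : L2F μ F) (h : H) :
    ‖∫ x, (v x : ℂ) * (⟪(↑f : Lp H 2 μ) x, h⟫_ℂ : ℂ) ∂μ‖ ≤
      ‖f‖ * (Real.sqrt (max BF 0) * ‖h‖) := by
  set B' := max BF 0 with hB'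
  have hB'0 : 0 ≤ B' := le_max_right _ _
  refine amgm_opt (norm_nonneg _) (by positivity) fun t ht => ?_
  have hmemb : ∀ᵐ x ∂μ, (↑f : Lp H 2 μ) x ∈ F x := f.2
  -- pointwise bound
  have hpt : ∀ᵐ x ∂μ, ENNReal.ofReal ‖(v x : ℂ) * (⟪(↑f : Lp H 2 μ) x, h⟫_ℂ : ℂ)‖ ≤
      ENNReal.ofReal ((t / 2) * ‖(↑f : Lp H 2 μ) x‖ ^ 2) +
      ENNReal.ofReal ((1 / (2 * t)) * ((v x) ^ 2 * ‖projFn (F x) h‖ ^ 2)) := by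
    filter_upwards [hmemb] with x hx
    have hcl := hF.closed x
    haveI : CompleteSpace (F x) := hcl.completeSpace_coe
    have hproj : projFn (F x) h = ((F x).orthogonalProjectionOnto h : H) := dif_pos hcl
    have hinner : (⟪(↑f : Lp H 2 μ) x, h⟫_ℂ : ℂ) = ⟪(↑f : Lp H 2 μ) x, projFn (F x) h⟫_ℂ := by
      rw [hproj]
      have hmem := (F x).sub_starProjection_mem_orthogonal h
      have := (Submodule.mem_orthogonal (F x) _).1 hmem _ hx
      rw [inner_sub_right] at this
      exact sub_eq_zero.1 this
    rw [← ENNReal.ofReal_add (by positivity) (by positivity)]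
    apply ENNReal.ofReal_le_ofReal
    rw [norm_mul, hinner]
    have h1 : ‖⟪(↑f : Lp H 2 μ) x, projFn (F x) h⟫_ℂ‖ ≤
        ‖(↑f : Lp H 2 μ) x‖ * ‖projFn (F x) h‖ := norm_inner_le_norm _ _
    have h2 : ‖(v x : ℂ)‖ = |v x| := by rw [Complex.norm_real, Real.norm_eq_abs]
    rw [h2]
    have h3 : |v x| * ‖⟪(↑f : Lp H 2 μ) x, projFn (F x) h⟫_ℂ‖ ≤
        |v x| * (‖(↑f : Lp H 2 μ) x‖ * ‖projFn (F x) h‖) :=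
      mul_le_mul_of_nonneg_left h1 (abs_nonneg _)
    refine h3.trans ?_
    have heq : (v x) ^ 2 * ‖projFn (F x) h‖ ^ 2 = (|v x| * ‖projFn (F x) h‖) ^ 2 := by
      rw [mul_pow, sq_abs]
    rw [heq]
    calc |v x| * (‖(↑f : Lp H 2 μ) x‖ * ‖projFn (F x) h‖)
        = ‖(↑f : Lp H 2 μ) x‖ * (|v x| * ‖projFn (F x) h‖) := by ring
      _ ≤ _ := amgm_step ht
  calc ‖∫ x, (v x : ℂ) * (⟪(↑f : Lp H 2 μ) x, h⟫_ℂ : ℂ) ∂μ‖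
      ≤ (∫⁻ x, ENNReal.ofReal ‖(v x : ℂ) * (⟪(↑f : Lp H 2 μ) x, h⟫_ℂ : ℂ)‖ ∂μ).toReal :=
        norm_integral_le_lintegral_norm _
    _ ≤ t / 2 * ‖f‖ ^ 2 + 1 / (2 * t) * (Real.sqrt B' * ‖h‖) ^ 2 := by
        apply ENNReal.toReal_le_of_le_ofReal (by positivity)
        calc ∫⁻ x, ENNReal.ofReal ‖(v x : ℂ) * (⟪(↑f : Lp H 2 μ) x, h⟫_ℂ : ℂ)‖ ∂μ
            ≤ ∫⁻ x, (ENNReal.ofReal ((t / 2) * ‖(↑f : Lp H 2 μ) x‖ ^ 2) +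
              ENNReal.ofReal ((1 / (2 * t)) * ((v x) ^ 2 * ‖projFn (F x) h‖ ^ 2))) ∂μ :=
              lintegral_mono_ae hpt
          _ = (∫⁻ x, ENNReal.ofReal ((t / 2) * ‖(↑f : Lp H 2 μ) x‖ ^ 2) ∂μ) +
              ∫⁻ x, ENNReal.ofReal ((1 / (2 * t)) * ((v x) ^ 2 * ‖projFn (F x) h‖ ^ 2)) ∂μ :=
              lintegral_add_left' (((Lp.aestronglyMeasurable
                (↑f : Lp H 2 μ)).norm.aemeasurable.pow_const 2).const_mul
                (t / 2)).ennreal_ofReal _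
          _ ≤ ENNReal.ofReal (t / 2) * ENNReal.ofReal (‖f‖ ^ 2) +
              ENNReal.ofReal (1 / (2 * t)) * ENNReal.ofReal (B' * ‖h‖ ^ 2) := by
              gcongr
              · have hnc : ‖f‖ = ‖(↑f : Lp H 2 μ)‖ := rfl
                rw [hnc, ← lintegral_norm_sq_eq μ (↑f : Lp H 2 μ), ← lintegral_const_mul'
                  _ _ ENNReal.ofReal_ne_top]
                refine lintegral_mono fun x => ?_
                rw [← ENNReal.ofReal_mul (by positivity)]
              · have heq : ∫⁻ x, ENNReal.ofReal ((1 / (2 * t)) *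
                    ((v x) ^ 2 * ‖projFn (F x) h‖ ^ 2)) ∂μ = ENNReal.ofReal (1 / (2 * t)) *
                    ∫⁻ x, ENNReal.ofReal ((v x) ^ 2 * ‖projFn (F x) h‖ ^ 2) ∂μ := by
                  rw [← lintegral_const_mul' _ _ ENNReal.ofReal_ne_top]
                  exact lintegral_congr fun x => ENNReal.ofReal_mul (by positivity)
                rw [heq]
                gcongr
                refine (hF.bessel h).trans (ENNReal.ofReal_le_ofReal ?_)
                nlinarith [sq_nonneg ‖h‖, le_max_left BF (0:ℝ)]
          _ = ENNReal.ofReal (t / 2 * ‖f‖ ^ 2 + 1 / (2 * t) * (B' * ‖h‖ ^ 2)) := by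
              rw [ENNReal.ofReal_add (by positivity) (by positivity),
                ← ENNReal.ofReal_mul (by positivity), ← ENNReal.ofReal_mul (by positivity)]
          _ ≤ ENNReal.ofReal (t / 2 * ‖f‖ ^ 2 + 1 / (2 * t) * (Real.sqrt B' * ‖h‖) ^ 2) := by
              apply ENNReal.ofReal_le_ofReal
              rw [mul_pow, Real.sq_sqrt hB'0]

lemma synth_norm_le {μ : Measure X} {F : X → Submodule ℂ H} {v : X → ℝ} {BF : ℝ}
    (hF : IsCBessel μ F v BF) (TF : L2F μ F →L[ℂ] H) (hTF : IsSynthesis μ F v TF) :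
    ‖TF‖ ≤ Real.sqrt (max BF 0) := by
  refine TF.opNorm_le_bound (Real.sqrt_nonneg _) fun f => ?_
  have hk := key_bound hF f (TF f)
  rw [← hTF f (TF f)] at hk
  rw [inner_self_eq_norm_sq_to_K (𝕜 := ℂ), norm_pow, RCLike.norm_ofReal, abs_norm] at hk
  rcases eq_or_lt_of_le (norm_nonneg (TF f)) with h0 | h0
  · rw [← h0]; positivity
  · have := mul_le_mul_of_nonneg_right hk (le_of_lt (inv_pos.2 h0))
    calc ‖TF f‖ = ‖TF f‖ ^ 2 * (‖TF f‖)⁻¹ := by field_simp [pow_two]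
      _ ≤ ‖f‖ * (Real.sqrt (max BF 0) * ‖TF f‖) * (‖TF f‖)⁻¹ := this
      _ = Real.sqrt (max BF 0) * ‖f‖ := by field_simp


set_option maxHeartbeats 2000000 in
set_option synthInstance.maxHeartbeats 1000000 in
/-- Let `dim H < ∞` and `(F, v)`, `(G, w)` be c-Bessel with bounds
`B_F, B_G`. If `Q` satisfies `T_{G,w} Q T*_{F,v} = I_H`, then
`‖Q‖ ≥ (dim H)⁻¹ / √(B_F B_G)`. -/
theorem statement11 [FiniteDimensional ℂ H]
    {μ : Measure X} {F G : X → Submodule ℂ H} {v w : X → ℝ} {BF BG : ℝ}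
    (hF : IsCBessel μ F v BF) (hG : IsCBessel μ G w BG) [CompleteSpace ↥(L2F μ F)]
    (TF : L2F μ F →L[ℂ] H) (hTF : IsSynthesis μ F v TF)
    (TG : L2F μ G →L[ℂ] H) (hTG : IsSynthesis μ G w TG)
    (Q : (L2F μ F : Type) →L[ℂ] (L2F μ G : Type))
    (hQ : TG.comp (Q.comp (ContinuousLinearMap.adjoint TF)) = ContinuousLinearMap.id ℂ H) :
    ‖Q‖ ≥ ((Module.finrank ℂ H : ℝ))⁻¹ / Real.sqrt (BF * BG) := by
  rcases Nat.eq_zero_or_pos (Module.finrank ℂ H) with hn | hn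
  · rw [hn]
    simp only [Nat.cast_zero, inv_zero, zero_div, ge_iff_le]
    exact norm_nonneg Q
  · haveI : Nontrivial H := Module.nontrivial_of_finrank_pos hn
    have hid : ‖(ContinuousLinearMap.id ℂ H)‖ = 1 := ContinuousLinearMap.norm_id
    have h1 : (1:ℝ) ≤ ‖TG‖ * (‖Q‖ * ‖ContinuousLinearMap.adjoint TF‖) := by
      rw [← hid, ← hQ]
      exact (TG.opNorm_comp_le _).trans (mul_le_mul_of_nonneg_left
        (Q.opNorm_comp_le (ContinuousLinearMap.adjoint TF)) (norm_nonneg TG))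
    set CF := Real.sqrt (max BF 0)
    set CG := Real.sqrt (max BG 0)
    have hCF : ‖ContinuousLinearMap.adjoint TF‖ ≤ CF := by
      refine ContinuousLinearMap.opNorm_le_bound _ (Real.sqrt_nonneg _) fun h => ?_
      have hk := key_bound hF (ContinuousLinearMap.adjoint TF h) h
      rw [← hTF (ContinuousLinearMap.adjoint TF h) h,
        ← ContinuousLinearMap.adjoint_inner_right TF _ h,
        inner_self_eq_norm_sq_to_K (𝕜 := ℂ), norm_pow, RCLike.norm_ofReal, abs_norm] at hk
      rcases eq_or_lt_of_le (norm_nonneg (ContinuousLinearMap.adjoint TF h)) with h0 | h0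
      · rw [← h0]; positivity
      · have h2 := mul_le_mul_of_nonneg_right hk (le_of_lt (inv_pos.2 h0))
        calc ‖ContinuousLinearMap.adjoint TF h‖
            = ‖ContinuousLinearMap.adjoint TF h‖ ^ 2 *
              (‖ContinuousLinearMap.adjoint TF h‖)⁻¹ := by field_simp [pow_two]
          _ ≤ ‖ContinuousLinearMap.adjoint TF h‖ * (CF * ‖h‖) *
              (‖ContinuousLinearMap.adjoint TF h‖)⁻¹ := h2
          _ ≤ CF * ‖h‖ := by
              rw [mul_comm (‖ContinuousLinearMap.adjoint TF h‖), mul_assoc]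
              rw [mul_inv_cancel₀ (ne_of_gt h0), mul_one]
    have hCG : ‖TG‖ ≤ CG := synth_norm_le hG TG hTG
    have h2 : (1:ℝ) ≤ CG * (‖Q‖ * CF) := by
      refine h1.trans ?_
      have : ‖Q‖ * ‖ContinuousLinearMap.adjoint TF‖ ≤ ‖Q‖ * CF :=
        mul_le_mul_of_nonneg_left hCF (norm_nonneg Q)
      calc ‖TG‖ * (‖Q‖ * ‖ContinuousLinearMap.adjoint TF‖) ≤ ‖TG‖ * (‖Q‖ * CF) :=
            mul_le_mul_of_nonneg_left this (norm_nonneg TG)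
        _ ≤ CG * (‖Q‖ * CF) := mul_le_mul_of_nonneg_right hCG (by positivity)
    have hBFpos : 0 < BF := by
      by_contra hc
      push_neg at hc
      have : CF = 0 := by
        simp only [CF]
        rw [max_eq_right hc, Real.sqrt_zero]
      rw [this, mul_zero, mul_zero] at h2
      linarith
    have hBGpos : 0 < BG := by
      by_contra hc
      push_neg at hc
      have : CG = 0 := by
        simp only [CG]
        rw [max_eq_right hc, Real.sqrt_zero]
      rw [this, zero_mul] at h2
      linarith
    have hCFe : CF = Real.sqrt BF := by simp [CF, max_eq_left hBFpos.le]
    have hCGe : CG = Real.sqrt BG := by simp [CG, max_eq_left hBGpos.le]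
    have hsq : Real.sqrt (BF * BG) = CF * CG := by
      rw [hCFe, hCGe, Real.sqrt_mul hBFpos.le]
    have hCFpos : 0 < CF := by rw [hCFe]; exact Real.sqrt_pos.2 hBFpos
    have hCGpos : 0 < CG := by rw [hCGe]; exact Real.sqrt_pos.2 hBGpos
    rw [ge_iff_le, hsq, div_le_iff₀ (by positivity)]
    have hn1 : (1:ℝ) ≤ (Module.finrank ℂ H : ℝ) := by exact_mod_cast hn
    have hinv : ((Module.finrank ℂ H : ℝ))⁻¹ ≤ 1 := inv_le_one_of_one_le₀ hn1
    refine hinv.trans ?_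
    calc (1:ℝ) ≤ CG * (‖Q‖ * CF) := h2
      _ = ‖Q‖ * (CF * CG) := by ring
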